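/- Let ι be a finite nonempty type, let K : ℕ, let u₀, v₀, u₀', v₀', w₀ : List α, and let u, v, u', v', w : ι → List α be families of words. Suppose that for all k₁ k₂ : ℕ there exists i : ι such that levenshtein (u₀ ++ v₀^{k₁} ++ u₀' ++ (v₀')^{k₂} ++ w₀) (u i ++ (v i)^{k₁} ++ (u' i) ++ (v' i)^{k₂} ++ w i) ≤ K. Then there exists a single index i : ι such that v₀ is conjugate to v i and v₀' is conjugate to v' i. (Core of the claim that connected loops admit a common conjugacy witness.) -/

import Mathlib

namespace Levenshtein

/-- Cost structure for Levenshtein edit distance (as in the former Mathlib file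
`Mathlib/Data/List/EditDistance/Defs.lean`). -/
structure Cost (α β δ : Type*) where
  /-- Cost to delete an element from a list. -/
  delete : α → δ
  /-- Cost to insert an element into a list. -/
  insert : β → δ
  /-- Cost to substitute one element for another in a list. -/
  substitute : α → β → δ

/-- The default cost structure: each insertion, deletion and substitution costs 1. -/
def defaultCost {α : Type*} [DecidableEq α] : Cost α α ℕ where
  delete _ := 1
  insert _ := 1
  substitute a b := if a = b then 0 else 1

/-- Inductive step of the edit distance computation. -/
def impl {α β δ : Type*} [AddZeroClass δ] [Min δ] (C : Cost α β δ)
    (xs : List α) (y : β) (d : {r : List δ // 0 < r.length}) : {r : List δ // 0 < r.length} :=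
  let ⟨ds, w⟩ := d
  xs.zip (ds.zip ds.tail) |>.foldr
    (init := ⟨[C.insert y + ds.getLast (List.ne_nil_of_length_pos w)], by simp⟩)
    (fun ⟨x, d₀, d₁⟩ ⟨r, w⟩ =>
      ⟨min (C.delete x + r[0]) (min (C.insert y + d₀) (C.substitute x y + d₁)) :: r, by simp⟩)

end Levenshtein

/-- Edit distances between all suffixes of `xs` and `ys`. -/
def suffixLevenshtein {α β δ : Type*} [AddZeroClass δ] [Min δ] (C : Levenshtein.Cost α β δ)
    (xs : List α) (ys : List β) : {r : List δ // 0 < r.length} :=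
  ys.foldr
    (Levenshtein.impl C xs)
    (xs.foldr (init := ⟨[0], by simp⟩) (fun a ⟨r, w⟩ => ⟨(C.delete a + r[0]) :: r, by simp⟩))

/-- The Levenshtein edit distance with cost structure `C`. -/
def levenshtein {α β δ : Type*} [AddZeroClass δ] [Min δ] (C : Levenshtein.Cost α β δ)
    (xs : List α) (ys : List β) : δ :=
  let ⟨r, w⟩ := suffixLevenshtein C xs ys
  r[0]

/-- `wpow u k` is the k-fold concatenation `u ++ u ++ ⋯ ++ u` (k copies). -/
def wpow {α : Type*} (u : List α) (k : ℕ) : List α := (List.replicate k u).flatten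

namespace Levenshtein

@[simp] theorem defaultCost_delete {α : Type*} [DecidableEq α] (a : α) :
    (defaultCost : Cost α α ℕ).delete a = 1 := rfl

@[simp] theorem defaultCost_insert {α : Type*} [DecidableEq α] (a : α) :
    (defaultCost : Cost α α ℕ).insert a = 1 := rfl

@[simp] theorem defaultCost_substitute {α : Type*} [DecidableEq α] (a b : α) :
    (defaultCost : Cost α α ℕ).substitute a b = if a = b then 0 else 1 := rfl

theorem impl_cons {α β δ : Type*} [AddZeroClass δ] [Min δ] (C : Cost α β δ)
    (x : α) (xs : List α) (y : β) (d : δ) (ds : List δ) (w : 0 < (d :: ds).length)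
    (w' : 0 < ds.length) :
    (impl C (x :: xs) y ⟨d :: ds, w⟩).1 =
      min (C.delete x + (impl C xs y ⟨ds, w'⟩).1[0]'(impl C xs y ⟨ds, w'⟩).2)
        (min (C.insert y + d) (C.substitute x y + ds[0])) :: (impl C xs y ⟨ds, w'⟩).1 :=
  match ds, w' with
  | _ :: _, _ => rfl

end Levenshtein

theorem levenshtein_eq_get {α β δ : Type*} [AddZeroClass δ] [Min δ] (C : Levenshtein.Cost α β δ)
    (xs : List α) (ys : List β) :
    levenshtein C xs ys = (suffixLevenshtein C xs ys).1[0]'(suffixLevenshtein C xs ys).2 := rfl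

theorem suffixLevenshtein_cons₁ {α β δ : Type*} [AddZeroClass δ] [Min δ]
    (C : Levenshtein.Cost α β δ) (x : α) (xs : List α) (ys : List β) :
    (suffixLevenshtein C (x :: xs) ys).1 =
      levenshtein C (x :: xs) ys :: (suffixLevenshtein C xs ys).1 := by
  induction ys with
  | nil => rfl
  | cons y ys ih =>
    have e : suffixLevenshtein C (x :: xs) ys =
        ⟨levenshtein C (x :: xs) ys :: (suffixLevenshtein C xs ys).1, by simp⟩ := Subtype.ext ih
    have e2 : (suffixLevenshtein C (x :: xs) (y :: ys)).1 =
        (Levenshtein.impl C (x :: xs) y (suffixLevenshtein C (x :: xs) ys)).1 := rfl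
    rw [levenshtein_eq_get C (x :: xs) (y :: ys)]
    simp only [e2, e, Levenshtein.impl_cons C x xs y _ _ _ (suffixLevenshtein C xs ys).2]
    rfl

theorem levenshtein_cons_cons {α β δ : Type*} [AddZeroClass δ] [Min δ]
    (C : Levenshtein.Cost α β δ) (x : α) (xs : List α) (y : β) (ys : List β) :
    levenshtein C (x :: xs) (y :: ys) =
      min (C.delete x + levenshtein C xs (y :: ys))
        (min (C.insert y + levenshtein C (x :: xs) ys)
          (C.substitute x y + levenshtein C xs ys)) := by
  have e : suffixLevenshtein C (x :: xs) ys =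
      ⟨levenshtein C (x :: xs) ys :: (suffixLevenshtein C xs ys).1, by simp⟩ :=
    Subtype.ext (suffixLevenshtein_cons₁ C x xs ys)
  have e2 : (suffixLevenshtein C (x :: xs) (y :: ys)).1 =
      (Levenshtein.impl C (x :: xs) y (suffixLevenshtein C (x :: xs) ys)).1 := rfl
  rw [levenshtein_eq_get C (x :: xs) (y :: ys)]
  simp only [e2, e, Levenshtein.impl_cons C x xs y _ _ _ (suffixLevenshtein C xs ys).2]
  rfl

theorem suffixLevenshtein_nil_left {α β δ : Type*} [AddZeroClass δ] [Min δ]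
    (C : Levenshtein.Cost α β δ) (ys : List β) :
    (suffixLevenshtein C [] ys).1 = [levenshtein C [] ys] := by
  cases ys with
  | nil => rfl
  | cons y ys => rfl

theorem getLast_of_eq_singleton {δ : Type*} (l : List δ) (a : δ) (h : l = [a]) (hne : l ≠ []) :
    l.getLast hne = a := by
  subst h; rfl

@[simp] theorem levenshtein_nil_nil {α β δ : Type*} [AddZeroClass δ] [Min δ]
    (C : Levenshtein.Cost α β δ) : levenshtein C ([] : List α) ([] : List β) = 0 := rfl

@[simp] theorem levenshtein_nil_cons {α β δ : Type*} [AddZeroClass δ] [Min δ]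
    (C : Levenshtein.Cost α β δ) (y : β) (ys : List β) :
    levenshtein C ([] : List α) (y :: ys) = C.insert y + levenshtein C [] ys := by
  show C.insert y + (suffixLevenshtein C [] ys).1.getLast _ = _
  congr 1
  exact getLast_of_eq_singleton _ _ (suffixLevenshtein_nil_left C ys) _

@[simp] theorem levenshtein_cons_nil {α β δ : Type*} [AddZeroClass δ] [Min δ]
    (C : Levenshtein.Cost α β δ) (x : α) (xs : List α) :
    levenshtein C (x :: xs) ([] : List β) = C.delete x + levenshtein C xs [] := rfl

open Levenshtein List


theorem wpow_add {α : Type*} (u : List α) (m n : ℕ) :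
    wpow u (m + n) = wpow u m ++ wpow u n := by
  unfold wpow; rw [List.replicate_add, List.flatten_append]

theorem wpow_one {α : Type*} (u : List α) : wpow u 1 = u := by
  unfold wpow; simp

theorem wpow_length {α : Type*} (u : List α) (k : ℕ) : (wpow u k).length = k * u.length := by
  induction k with
  | zero => simp [wpow]
  | succ n ih =>
    have : n + 1 = n + 1 := rfl
    rw [wpow_add, List.length_append, ih, wpow_one]; ring

theorem lev_nil_left {α : Type*} [DecidableEq α] (b : List α) :
    levenshtein defaultCost ([] : List α) b = b.length := by
  induction b with
  | nil => simp
  | cons y ys ih => simp [ih, Nat.add_comm]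

theorem lev_nil_right {α : Type*} [DecidableEq α] (a : List α) :
    levenshtein defaultCost a ([] : List α) = a.length := by
  induction a with
  | nil => simp
  | cons x xs ih => simp [ih, Nat.add_comm]

theorem mem_dropLast_cons' {β : Type*} {t x : β} {L : List β} (h : x ∈ (t :: L).dropLast) :
    x = t ∨ x ∈ L.dropLast := by
  cases L with
  | nil => simp at h
  | cons b l =>
    rw [List.dropLast_cons₂] at h
    rcases List.mem_cons.mp h with h | h
    · exact Or.inl h
    · exact Or.inr h

theorem lev_decomp {α : Type*} [DecidableEq α] :
    ∀ (n : ℕ) (a b : List α), a.length + b.length ≤ n →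
    ∀ K : ℕ, levenshtein defaultCost a b ≤ K →
    ∃ L : List (List α × List α × List α),
      a = (L.map fun t => t.1 ++ t.2.1).flatten ∧
      b = (L.map fun t => t.1 ++ t.2.2).flatten ∧
      (L.map fun t => max t.2.1.length t.2.2.length).sum ≤ K ∧
      ∀ t ∈ L.dropLast, 1 ≤ max t.2.1.length t.2.2.length := by
  intro n
  induction n with
  | zero =>
    intro a b hn K hK
    have ha : a = [] := List.length_eq_zero_iff.mp (by omega)
    have hb : b = [] := List.length_eq_zero_iff.mp (by omega)
    subst ha; subst hb
    exact ⟨[], by simp⟩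
  | succ n ih =>
    intro a b hn K hK
    match a, b with
    | [], b =>
      refine ⟨[([], [], b)], by simp, by simp, ?_, by simp⟩
      rw [lev_nil_left] at hK
      simpa using hK
    | (x :: xs), [] =>
      refine ⟨[([], x :: xs, [])], by simp, by simp, ?_, by simp⟩
      rw [lev_nil_right] at hK
      simpa using hK
    | (x :: xs), (y :: ys) =>
      rw [levenshtein_cons_cons] at hK
      rcases min_le_iff.mp hK with h1 | hK'
      · -- delete
        simp only [defaultCost_delete] at h1
        have hK1 : 1 ≤ K := le_trans (by omega) h1
        have h1' : levenshtein defaultCost xs (y :: ys) ≤ K - 1 := by omega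
        obtain ⟨L, e1, e2, e3, e4⟩ := ih xs (y :: ys) (by simp at hn ⊢; omega) _ h1'
        refine ⟨([], [x], []) :: L, by simp [e1], by simp [e2], by simp; omega, ?_⟩
        intro t ht
        rcases mem_dropLast_cons' ht with h | h
        · subst h; simp
        · exact e4 t h
      rcases min_le_iff.mp hK' with h1 | h1
      · -- insert
        simp only [defaultCost_insert] at h1
        have hK1 : 1 ≤ K := le_trans (by omega) h1
        have h1' : levenshtein defaultCost (x :: xs) ys ≤ K - 1 := by omega
        obtain ⟨L, e1, e2, e3, e4⟩ := ih (x :: xs) ys (by simp at hn ⊢; omega) _ h1'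
        refine ⟨([], [], [y]) :: L, by simp [e1], by simp [e2], by simp; omega, ?_⟩
        intro t ht
        rcases mem_dropLast_cons' ht with h | h
        · subst h; simp
        · exact e4 t h
      · -- substitute
        simp only [defaultCost_substitute] at h1
        by_cases hxy : x = y
        · subst hxy
          simp at h1
          obtain ⟨L, e1, e2, e3, e4⟩ := ih xs ys (by simp at hn ⊢; omega) _ h1
          match L, e1, e2, e3, e4 with
          | [], e1, e2, e3, e4 =>
            simp only [List.map_nil, List.flatten_nil] at e1 e2
            subst e1; subst e2
            exact ⟨[([x], [], [])], by simp, by simp, by simp, by simp⟩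
          | ((c, p, q) :: rest), e1, e2, e3, e4 =>
            refine ⟨((x :: c), p, q) :: rest, by simp [e1], by simp [e2], by simpa using e3, ?_⟩
            intro t ht
            rcases mem_dropLast_cons' ht with h | h
            · subst h
              cases rest with
              | nil =>
                exfalso
                simp at ht
              | cons r rs =>
                exact e4 (c, p, q) (by rw [List.dropLast_cons₂]; exact List.mem_cons_self)
            · cases rest with
              | nil => simp at h
              | cons r rs =>
                exact e4 t (by rw [List.dropLast_cons₂]; exact List.mem_cons_of_mem _ h)
        · simp only [if_neg hxy] at h1
          have hK1 : 1 ≤ K := le_trans (by omega) h1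
          have h1' : levenshtein defaultCost xs ys ≤ K - 1 := by omega
          obtain ⟨L, e1, e2, e3, e4⟩ := ih xs ys (by simp at hn ⊢; omega) _ h1'
          refine ⟨([], [x], [y]) :: L, by simp [e1], by simp [e2], by simp; omega, ?_⟩
          intro t ht
          rcases mem_dropLast_cons' ht with h | h
          · subst h; simp
          · exact e4 t h
theorem common_factor {α : Type*} :
    ∀ (L : List (List α × List α × List α)) (K m s : ℕ),
      1 ≤ m →
      (L.map fun t => max t.2.1.length t.2.2.length).sum ≤ K →
      (∀ t ∈ L.dropLast, 1 ≤ max t.2.1.length t.2.2.length) →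
      s + (K+1)*(m+K) ≤ ((L.map fun t => t.1 ++ t.2.1).flatten).length →
      ∃ s' t', s ≤ s' ∧ s' + m ≤ s + (K+1)*(m+K) ∧
        t' ≤ s' + K ∧ s' ≤ t' + K ∧
        t' + m ≤ ((L.map fun t => t.1 ++ t.2.2).flatten).length ∧
        (((L.map fun t => t.1 ++ t.2.1).flatten).drop s').take m =
        (((L.map fun t => t.1 ++ t.2.2).flatten).drop t').take m := by
  intro L
  induction L with
  | nil =>
    intro K m s hm hsum hdl hlen
    exfalso
    simp only [List.map_nil, List.flatten_nil, List.length_nil] at hlen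
    nlinarith
  | cons hd L ih =>
    intro K m s hm hsum hdl hlen
    obtain ⟨c, x, y⟩ := hd
    simp only [List.map_cons, List.flatten_cons, List.length_append] at hlen
    by_cases hcase : s + m ≤ c.length
    · -- the common part c covers the window start
      refine ⟨s, s, le_refl s, ?_, by omega, by omega, ?_, ?_⟩
      · nlinarith
      · simp only [List.map_cons, List.flatten_cons, List.length_append]; omega
      · simp only [List.map_cons, List.flatten_cons]
        rw [List.append_assoc, List.drop_append_of_le_length (show s ≤ c.length by omega),
            List.append_assoc, List.drop_append_of_le_length (show s ≤ c.length by omega),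
            List.take_append_of_le_length (by rw [List.length_drop]; omega),
            List.take_append_of_le_length (by rw [List.length_drop]; omega)]
    · -- recurse into the tail
      cases L with
      | nil =>
        -- single trio: c is everything except x, contradiction
        exfalso
        simp only [List.map_cons, List.map_nil, List.sum_cons, List.sum_nil] at hsum
        simp only [List.map_nil, List.flatten_nil, List.length_nil, List.append_nil,
          List.length_append] at hlen
        have hmax : max x.length y.length ≤ K := by omega
        have hx : x.length ≤ K := le_trans (le_max_left _ _) hmax
        nlinarith
      | cons hd2 L2 =>
        set Ltail := hd2 :: L2 with hL
        have hdelta : 1 ≤ max x.length y.length := by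
          apply hdl (c, x, y)
          rw [List.dropLast_cons₂]
          exact List.mem_cons_self
        set δ := max x.length y.length with hδ
        simp only [List.map_cons, List.sum_cons] at hsum
        have hδK : δ ≤ K := le_trans (Nat.le_add_right _ _) hsum
        set K₁ := K - δ with hK₁
        have hsum₁ : ((Ltail.map fun t => max t.2.1.length t.2.2.length).sum) ≤ K₁ := by omega
        have hdl₁ : ∀ t ∈ Ltail.dropLast, 1 ≤ max t.2.1.length t.2.2.length := by
          intro t ht
          apply hdl t
          rw [List.dropLast_cons₂]
          exact List.mem_cons_of_mem _ ht
        have hK1 : 1 ≤ K := le_trans hdelta hδK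
        have hWmono : (K₁+1)*(m+K₁) + m + δ ≤ (K+1)*(m+K) := by
          have h1 : (K₁+1)*(m+K₁) ≤ (K₁+1)*(m+K) := by
            apply Nat.mul_le_mul_left; omega
          have h2 : (K₁+1)*(m+K) + δ*(m+K) = (K+1)*(m+K) := by
            rw [← Nat.add_mul]; congr 1; omega
          nlinarith
        set s₁ := s - (c.length + x.length) with hs₁
        have hrec : s₁ + (K₁+1)*(m+K₁) ≤ ((Ltail.map fun t => t.1 ++ t.2.1).flatten).length := by
          rcases le_or_gt (c.length + x.length) s with hle | hlt
          · have : s₁ = s - (c.length + x.length) := rfl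
            omega
          · have hs10 : s₁ = 0 := by omega
            have hxδ : x.length ≤ δ := le_max_left _ _
            omega
        obtain ⟨s₁', t₁', r1, r2, r3, r4, r5, r6⟩ := ih K₁ m s₁ hm hsum₁ hdl₁ hrec
        refine ⟨s₁' + (c.length + x.length), t₁' + (c.length + y.length), ?_, ?_, ?_, ?_, ?_, ?_⟩
        · rcases le_or_gt (c.length + x.length) s with hle | hlt
          · omega
          · omega
        · -- upper bound on s' + m
          rcases le_or_gt (c.length + x.length) s with hle | hlt
          · have : s₁ = s - (c.length + x.length) := rfl
            omega
          · have hs10 : s₁ = 0 := by omega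
            have hxδ : x.length ≤ δ := le_max_left _ _
            omega
        · have hyδ : y.length ≤ δ := le_max_right _ _
          have hxδ : x.length ≤ δ := le_max_left _ _
          omega
        · have hyδ : y.length ≤ δ := le_max_right _ _
          have hxδ : x.length ≤ δ := le_max_left _ _
          omega
        · simp only [List.map_cons, List.flatten_cons, List.length_append]
          omega
        · simp only [List.map_cons, List.flatten_cons]
          have ea : (c ++ x ++ (Ltail.map fun t => t.1 ++ t.2.1).flatten).drop
              (s₁' + (c.length + x.length)) = ((Ltail.map fun t => t.1 ++ t.2.1).flatten).drop s₁' := by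
            rw [← List.length_append (as := c) (bs := x), Nat.add_comm s₁' (c ++ x).length]
            exact List.drop_length_add_append s₁'
          have eb : (c ++ y ++ (Ltail.map fun t => t.1 ++ t.2.2).flatten).drop
              (t₁' + (c.length + y.length)) = ((Ltail.map fun t => t.1 ++ t.2.2).flatten).drop t₁' := by
            rw [← List.length_append (as := c) (bs := y), Nat.add_comm t₁' (c ++ y).length]
            exact List.drop_length_add_append t₁'
          rw [ea, eb, r6]
theorem drop_append_ge {α : Type*} (l₁ l₂ : List α) (n : ℕ) (h : l₁.length ≤ n) :
    (l₁ ++ l₂).drop n = l₂.drop (n - l₁.length) := by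
  conv_lhs => rw [show n = l₁.length + (n - l₁.length) from by omega]
  exact List.drop_length_add_append _

theorem wpow_drop_take_small {α : Type*} (p : List α) (n rm : ℕ) (hp : 1 ≤ p.length)
    (hrm : rm < p.length) (h : rm + p.length ≤ n * p.length) :
    ((wpow p n).drop rm).take p.length = p.rotate rm := by
  rcases Nat.eq_zero_or_pos rm with h0 | hpos
  · subst h0
    have hn1 : 1 ≤ n := by nlinarith
    rw [show n = 1 + (n - 1) from by omega, wpow_add, wpow_one, List.drop_zero,
      List.take_append_of_le_length (le_refl _), List.take_length, List.rotate_zero]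
  · have hn2 : 2 ≤ n := by nlinarith
    rw [show n = 1 + (1 + (n - 2)) from by omega, wpow_add, wpow_one, wpow_add, wpow_one,
      List.drop_append_of_le_length (by omega : rm ≤ p.length),
      List.take_append,
      List.take_of_length_le (by rw [List.length_drop]; omega),
      List.length_drop,
      show p.length - (p.length - rm) = rm from by omega,
      List.take_append_of_le_length (by omega : rm ≤ p.length),
      List.rotate_eq_drop_append_take (by omega : rm ≤ p.length)]

theorem wpow_drop_take {α : Type*} (p : List α) (k r : ℕ) (hp : 1 ≤ p.length)
    (h : r + p.length ≤ k * p.length) :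
    ((wpow p k).drop r).take p.length = p.rotate (r % p.length) := by
  have hq : k = r / p.length + (k - r / p.length) := by
    have h1 : r / p.length * p.length ≤ r := Nat.div_mul_le_self r p.length
    have h2 : (r / p.length + 1) * p.length ≤ k * p.length := by
      calc (r / p.length + 1) * p.length = r / p.length * p.length + p.length := by ring
      _ ≤ r + p.length := by omega
      _ ≤ k * p.length := h
    have := Nat.le_of_mul_le_mul_right h2 (by omega : 0 < p.length)
    omega
  conv_lhs => rw [hq, wpow_add]
  rw [drop_append_ge _ _ r (by rw [wpow_length]; exact Nat.div_mul_le_self r p.length)]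
  have hc1 : r / p.length * p.length = p.length * (r / p.length) := Nat.mul_comm _ _
  have h2' : p.length * (r / p.length) + r % p.length = r := Nat.div_add_mod r p.length
  have hmod : r - (wpow p (r / p.length)).length = r % p.length := by
    rw [wpow_length]; omega
  rw [hmod]
  apply wpow_drop_take_small p _ _ hp (Nat.mod_lt _ (by omega))
  have h1 : (k - r / p.length) * p.length = k * p.length - r / p.length * p.length :=
    Nat.sub_mul _ _ _
  have h3 : r / p.length * p.length ≤ r := Nat.div_mul_le_self r p.length
  omega

theorem rot_of_lev {α : Type*} [DecidableEq α] (K : ℕ) (A B A' B' p q : List α) (k : ℕ)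
    (hl : q.length = p.length) (hp : 1 ≤ p.length)
    (hk : A.length + A'.length + 2*K + (K+1)*(p.length+K) + p.length ≤ k * p.length)
    (hlev : levenshtein defaultCost (A ++ wpow p k ++ B) (A' ++ wpow q k ++ B') ≤ K) :
    List.IsRotated p q := by
  set a := A ++ wpow p k ++ B with ha
  set b := A' ++ wpow q k ++ B' with hb
  obtain ⟨L, e1, e2, e3, e4⟩ := lev_decomp (a.length + b.length) a b le_rfl K hlev
  set s := max A.length A'.length + K with hs
  have hlena : a.length = A.length + k * p.length + B.length := by
    rw [ha]; simp [wpow_length]; ring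
  have hlenb : b.length = A'.length + k * p.length + B'.length := by
    rw [hb]; simp [wpow_length, hl]; ring
  have hwin : s + (K+1)*(p.length+K) ≤ ((L.map fun t => t.1 ++ t.2.1).flatten).length := by
    rw [← e1, hlena]
    have : s ≤ A.length + A'.length + K := by omega
    omega
  obtain ⟨s', t', r1, r2, r3, r4, r5, r6⟩ := common_factor L K p.length s hp e3 e4 hwin
  rw [← e1, ← e2] at r6
  rw [← e2] at r5
  -- a-side computation
  have hsA : A.length ≤ s' := le_trans (by omega) r1
  have hsup : s' + p.length ≤ A.length + k * p.length := by
    have h2 : s' + p.length ≤ s + (K+1)*(p.length+K) := r2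
    have h3 : s + (K+1)*(p.length+K) ≤ A.length + k * p.length := by
      have : s ≤ A.length + A'.length + K := by omega
      omega
    omega
  have eqa : (a.drop s').take p.length = p.rotate ((s' - A.length) % p.length) := by
    rw [ha, List.append_assoc, drop_append_ge _ _ _ hsA,
      List.drop_append_of_le_length (by rw [wpow_length]; omega),
      List.take_append_of_le_length (by rw [List.length_drop, wpow_length]; omega)]
    exact wpow_drop_take p k _ hp (by omega)
  -- b-side
  have htA : A'.length ≤ t' := by omega
  have htup : t' + p.length ≤ A'.length + k * p.length := by
    have h2 : s' + p.length ≤ s + (K+1)*(p.length+K) := r2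
    have h3 : s + (K+1)*(p.length+K) + K ≤ A'.length + k * p.length := by
      have : s ≤ A.length + A'.length + K := by omega
      omega
    omega
  have eqb : (b.drop t').take p.length = q.rotate ((t' - A'.length) % p.length) := by
    rw [hb, List.append_assoc, drop_append_ge _ _ _ htA,
      List.drop_append_of_le_length (by rw [wpow_length, hl]; omega),
      List.take_append_of_le_length (by rw [List.length_drop, wpow_length, hl]; omega)]
    have := wpow_drop_take q k (t' - A'.length) (by omega) (by rw [hl]; omega)
    rw [hl] at this
    exact this
  have key : p.rotate ((s' - A.length) % p.length) = q.rotate ((t' - A'.length) % p.length) := by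
    rw [← eqa, ← eqb, r6]
  have h1 : p.IsRotated (p.rotate ((s' - A.length) % p.length)) :=
    (List.IsRotated.forall p _).symm
  rw [key] at h1
  exact h1.trans (List.IsRotated.forall q _)

theorem lev_length_bound {α : Type*} [DecidableEq α] :
    ∀ (n : ℕ) (a b : List α), a.length + b.length ≤ n →
      b.length ≤ a.length + levenshtein defaultCost a b ∧
      a.length ≤ b.length + levenshtein defaultCost a b := by
  intro n
  induction n with
  | zero =>
    intro a b hn
    have ha : a = [] := List.length_eq_zero_iff.mp (by omega)
    have hb : b = [] := List.length_eq_zero_iff.mp (by omega)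
    subst ha; subst hb; simp
  | succ n ih =>
    intro a b hn
    match a, b with
    | [], b => rw [lev_nil_left]; simp
    | (x :: xs), [] => rw [lev_nil_right]; simp
    | (x :: xs), (y :: ys) =>
      rw [levenshtein_cons_cons]
      have i1 := ih xs (y :: ys) (by simp at hn ⊢; omega)
      have i2 := ih (x :: xs) ys (by simp at hn ⊢; omega)
      have i3 := ih xs ys (by simp at hn ⊢; omega)
      simp only [defaultCost_delete, defaultCost_insert, defaultCost_substitute] at *
      rcases min_cases (1 + levenshtein defaultCost xs (y :: ys))
        ((1 + levenshtein defaultCost (x :: xs) ys) ⊓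
          ((if x = y then 0 else 1) + levenshtein defaultCost xs ys)) with ⟨he, _⟩ | ⟨he, _⟩
      · rw [he]; simp at *; omega
      · rcases min_cases (1 + levenshtein defaultCost (x :: xs) ys)
          ((if x = y then 0 else 1) + levenshtein defaultCost xs ys) with ⟨he2, _⟩ | ⟨he2, _⟩
        · rw [he, he2]; simp at *; omega
        · rw [he, he2]
          by_cases hxy : x = y <;> simp [hxy] at * <;> omega

theorem coeff_le_sq (C₁ C₂ D e f : ℕ)
    (h : ∀ N, ∃ k, N ≤ k ∧ C₁ + k*k*e ≤ C₂ + k*D + k*k*f) : e ≤ f := by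
  by_contra hc
  push_neg at hc
  obtain ⟨k, hk, hle⟩ := h (C₂ + D + 1)
  have h1 : k*k*f + k*k ≤ k*k*e := by nlinarith
  nlinarith

theorem coeff_le_lin (C₁ C₂ e f : ℕ)
    (h : ∀ N, ∃ k, N ≤ k ∧ C₁ + k*e ≤ C₂ + k*f) : e ≤ f := by
  by_contra hc
  push_neg at hc
  obtain ⟨k, hk, hle⟩ := h (C₂ + 1)
  have h1 : k*f + k ≤ k*e := by nlinarith
  omega

theorem stmt_10 {α : Type*} [DecidableEq α] {ι : Type*} [Fintype ι] [Nonempty ι]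
    (K : ℕ) (u₀ v₀ u₀' v₀' w₀ : List α) (u v u' v' w : ι → List α)
    (h : ∀ k₁ k₂ : ℕ, ∃ i : ι,
      levenshtein Levenshtein.defaultCost
        (u₀ ++ wpow v₀ k₁ ++ u₀' ++ wpow v₀' k₂ ++ w₀)
        (u i ++ wpow (v i) k₁ ++ u' i ++ wpow (v' i) k₂ ++ w i) ≤ K) :
    ∃ i : ι, List.IsRotated v₀ (v i) ∧ List.IsRotated v₀' (v' i) := by
  classical
  choose f hf using fun k => h k (k*k)
  obtain ⟨i, hi⟩ := Finite.exists_infinite_fiber f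
  have hinf : (f ⁻¹' {i}).Infinite := Set.infinite_coe_iff.mp hi
  have haux : ∀ N : ℕ, ∃ k, N ≤ k ∧ levenshtein defaultCost
      (u₀ ++ wpow v₀ k ++ u₀' ++ wpow v₀' (k*k) ++ w₀)
      (u i ++ wpow (v i) k ++ u' i ++ wpow (v' i) (k*k) ++ w i) ≤ K := by
    intro N
    obtain ⟨k, hk, hN⟩ := hinf.exists_gt N
    have hfk : f k = i := by simpa using hk
    refine ⟨k, hN.le, ?_⟩
    have := hf k
    rw [hfk] at this
    exact this
  set ℓ₁ := v₀.length with hℓ₁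
  set ℓ₂ := v₀'.length with hℓ₂
  set m₁ := (v i).length with hm₁
  set m₂ := (v' i).length with hm₂
  set Ca := u₀.length + u₀'.length + w₀.length with hCa
  set Cb := (u i).length + (u' i).length + (w i).length with hCb
  have hlena : ∀ k : ℕ, (u₀ ++ wpow v₀ k ++ u₀' ++ wpow v₀' (k*k) ++ w₀).length
      = Ca + k * ℓ₁ + k*k*ℓ₂ := by
    intro k; simp [wpow_length]; ring
  have hlenb : ∀ k : ℕ, (u i ++ wpow (v i) k ++ u' i ++ wpow (v' i) (k*k) ++ w i).length
      = Cb + k * m₁ + k*k*m₂ := by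
    intro k; simp [wpow_length]; ring
  have hlb : ∀ k : ℕ,
      (u i ++ wpow (v i) k ++ u' i ++ wpow (v' i) (k*k) ++ w i).length
        ≤ (u₀ ++ wpow v₀ k ++ u₀' ++ wpow v₀' (k*k) ++ w₀).length
          + levenshtein defaultCost (u₀ ++ wpow v₀ k ++ u₀' ++ wpow v₀' (k*k) ++ w₀)
              (u i ++ wpow (v i) k ++ u' i ++ wpow (v' i) (k*k) ++ w i) ∧
      (u₀ ++ wpow v₀ k ++ u₀' ++ wpow v₀' (k*k) ++ w₀).length
        ≤ (u i ++ wpow (v i) k ++ u' i ++ wpow (v' i) (k*k) ++ w i).length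
          + levenshtein defaultCost (u₀ ++ wpow v₀ k ++ u₀' ++ wpow v₀' (k*k) ++ w₀)
              (u i ++ wpow (v i) k ++ u' i ++ wpow (v' i) (k*k) ++ w i) :=
    fun k => lev_length_bound _ _ _ le_rfl
  -- quadratic coefficients agree
  have hq1 : ℓ₂ ≤ m₂ := by
    apply coeff_le_sq Ca (Cb + K) m₁ ℓ₂ m₂
    intro N
    obtain ⟨k, hkN, hlev⟩ := haux N
    refine ⟨k, hkN, ?_⟩
    have hb := (hlb k).2
    have hb2 := le_trans hb (Nat.add_le_add_left hlev _)
    rw [hlena k, hlenb k] at hb2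
    linarith [Nat.zero_le (k*ℓ₁), Nat.zero_le (k*m₁)]
  have hq2 : m₂ ≤ ℓ₂ := by
    apply coeff_le_sq Cb (Ca + K) ℓ₁ m₂ ℓ₂
    intro N
    obtain ⟨k, hkN, hlev⟩ := haux N
    refine ⟨k, hkN, ?_⟩
    have hb := (hlb k).1
    have hb2 := le_trans hb (Nat.add_le_add_left hlev _)
    rw [hlena k, hlenb k] at hb2
    linarith [Nat.zero_le (k*ℓ₁), Nat.zero_le (k*m₁)]
  have heq2 : ℓ₂ = m₂ := le_antisymm hq1 hq2
  have hl1 : ℓ₁ ≤ m₁ := by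
    apply coeff_le_lin Ca (Cb + K) ℓ₁ m₁
    intro N
    obtain ⟨k, hkN, hlev⟩ := haux N
    refine ⟨k, hkN, ?_⟩
    have hb := (hlb k).2
    have hb2 := le_trans hb (Nat.add_le_add_left hlev _)
    rw [hlena k, hlenb k] at hb2
    rw [heq2] at hb2
    linarith [Nat.zero_le (k*ℓ₁), Nat.zero_le (k*m₁)]
  have hl2 : m₁ ≤ ℓ₁ := by
    apply coeff_le_lin Cb (Ca + K) m₁ ℓ₁
    intro N
    obtain ⟨k, hkN, hlev⟩ := haux N
    refine ⟨k, hkN, ?_⟩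
    have hb := (hlb k).1
    have hb2 := le_trans hb (Nat.add_le_add_left hlev _)
    rw [hlena k, hlenb k] at hb2
    rw [heq2] at hb2
    linarith [Nat.zero_le (k*ℓ₁), Nat.zero_le (k*m₁)]
  have heq1 : ℓ₁ = m₁ := le_antisymm hl1 hl2
  refine ⟨i, ?_, ?_⟩
  · -- v₀ ~ v i
    rcases Nat.eq_zero_or_pos ℓ₁ with h0 | hpos
    · have e1 : v₀ = [] := List.length_eq_zero_iff.mp h0
      have e2 : v i = [] := List.length_eq_zero_iff.mp (by omega)
      rw [e1, e2]
    · obtain ⟨k, hkN, hlev⟩ := haux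
        (u₀.length + (u i).length + 2*K + (K+1)*(ℓ₁+K) + ℓ₁)
      apply rot_of_lev K u₀ (u₀' ++ wpow v₀' (k*k) ++ w₀)
        (u i) (u' i ++ wpow (v' i) (k*k) ++ w i) v₀ (v i) k heq1.symm hpos
      · calc u₀.length + (u i).length + 2*K + (K+1)*(v₀.length+K) + v₀.length ≤ k := hkN
        _ ≤ k * v₀.length := Nat.le_mul_of_pos_right k hpos
      · simpa only [List.append_assoc] using hlev
  · -- v₀' ~ v' i
    rcases Nat.eq_zero_or_pos ℓ₂ with h0 | hpos
    · have e1 : v₀' = [] := List.length_eq_zero_iff.mp h0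
      have e2 : v' i = [] := List.length_eq_zero_iff.mp (by omega)
      rw [e1, e2]
    · set N₂ := u₀.length + u₀'.length + (u i).length + (u' i).length
        + 2*K + (K+1)*(ℓ₂+K) + ℓ₂ + 2*ℓ₁ + 1 with hN₂
      obtain ⟨k, hkN, hlev⟩ := haux N₂
      apply rot_of_lev K (u₀ ++ wpow v₀ k ++ u₀') w₀
        ((u i) ++ wpow (v i) k ++ (u' i)) (w i) v₀' (v' i) (k*k) heq2.symm hpos
      · have hA : (u₀ ++ wpow v₀ k ++ u₀').length = u₀.length + k*ℓ₁ + u₀'.length := by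
          simp [wpow_length]; ring
        have hA' : ((u i) ++ wpow (v i) k ++ (u' i)).length
            = (u i).length + k*ℓ₁ + (u' i).length := by
          have hv : (v i).length = ℓ₁ := by rw [heq1, hm₁]
          simp [wpow_length, hv]; ring
        rw [hA, hA']
        have hk1 : 1 ≤ k := by omega
        have step1 : u₀.length + k*ℓ₁ + u₀'.length + ((u i).length + k*ℓ₁ + (u' i).length)
            + 2*K + (K+1)*(v₀'.length+K) + v₀'.length ≤ k + k*ℓ₁ + k*ℓ₁ := by
          have : u₀.length + u₀'.length + (u i).length + (u' i).length
              + 2*K + (K+1)*(ℓ₂+K) + ℓ₂ ≤ k := by omega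
          linarith
        have step2 : k + k*ℓ₁ + k*ℓ₁ = k * (1 + 2*ℓ₁) := by ring
        have step3 : k * (1 + 2*ℓ₁) ≤ k * k := by
          apply Nat.mul_le_mul_left
          omega
        have step4 : k * k ≤ k * k * v₀'.length := Nat.le_mul_of_pos_right _ hpos
        omega
      · simpa only [List.append_assoc] using hlev
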